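/- If a structured switched linear system is structurally controllable, then the concatenated structured pattern [A_1, A_2, …, A_m, B_1, B_2, …, B_m] has generic rank n. -/

import Mathlib

/-- A realization of the structured pattern `(PA, PB)` of a switched linear system:
each matrix vanishes at every fixed-zero (non-free-parameter) position. -/
def IsRealization {m n r : ℕ}
    (PA : Fin m → Fin n → Fin n → Prop) (PB : Fin m → Fin n → Fin r → Prop)
    (A : Fin m → Matrix (Fin n) (Fin n) ℝ) (B : Fin m → Matrix (Fin n) (Fin r) ℝ) : Prop :=
  (∀ i k l, ¬ PA i k l → A i k l = 0) ∧ (∀ i k j, ¬ PB i k j → B i k j = 0)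

/-- The switched controllable subspace `⟨A_1,…,A_m | B_1,…,B_m⟩`: the smallest subspace of
`ℝ^n` containing the columns of every `B i` and invariant under every `A i`. -/
noncomputable def switchedCtrb {m n r : ℕ} (A : Fin m → Matrix (Fin n) (Fin n) ℝ)
    (B : Fin m → Matrix (Fin n) (Fin r) ℝ) : Submodule ℝ (Fin n → ℝ) :=
  sInf {W : Submodule ℝ (Fin n → ℝ) |
    (∀ i j, (fun k => B i k j) ∈ W) ∧ ∀ i, ∀ x ∈ W, (A i).mulVec x ∈ W}

/-- Structural controllability of the structured switched linear system. -/
def StructurallyControllable {m n r : ℕ}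
    (PA : Fin m → Fin n → Fin n → Prop) (PB : Fin m → Fin n → Fin r → Prop) : Prop :=
  ∃ A B, IsRealization PA PB A B ∧ switchedCtrb A B = ⊤

/-- The concatenated structured pattern `[A_1,…,A_m,B_1,…,B_m]`: an `n × m(n+r)` pattern
whose columns are all the columns of the `A_i` followed by all the columns of the `B_i`,
columns from different subsystems counted as distinct. -/
def concatPattern {m n r : ℕ}
    (PA : Fin m → Fin n → Fin n → Prop) (PB : Fin m → Fin n → Fin r → Prop)
    (k : Fin n) : (Fin m × Fin n) ⊕ (Fin m × Fin r) → Prop :=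
  fun c => match c with
  | Sum.inl (i, l) => PA i k l
  | Sum.inr (i, j) => PB i k j

/-- The generic rank of a structured pattern: the maximal rank achieved by a realization,
i.e. by a real matrix vanishing at every fixed-zero position. -/
noncomputable def gRank {n : ℕ} {α : Type} [Fintype α] (P : Fin n → α → Prop) : ℕ :=
  sSup {t : ℕ | ∃ M : Matrix (Fin n) α ℝ, (∀ k c, ¬ P k c → M k c = 0) ∧ M.rank = t}

/-- If a structured switched linear system is structurally controllable,
then the concatenated structured pattern `[A_1,…,A_m,B_1,…,B_m]` has generic rank `n`. -/
theorem gRank_concatPattern_of_structurallyControllable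
    {m n r : ℕ} (PA : Fin m → Fin n → Fin n → Prop) (PB : Fin m → Fin n → Fin r → Prop)
    (h : StructurallyControllable PA PB) :
    gRank (concatPattern PA PB) = n := by
  obtain ⟨A, B, ⟨hA, hB⟩, hctrb⟩ := h
  set M : Matrix (Fin n) ((Fin m × Fin n) ⊕ (Fin m × Fin r)) ℝ :=
    fun k c => match c with
      | Sum.inl (i, l) => A i k l
      | Sum.inr (i, j) => B i k j with hM
  have hrange : LinearMap.range M.mulVecLin = ⊤ := by
    rw [eq_top_iff, ← hctrb]
    refine sInf_le ⟨?_, ?_⟩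
    · intro i j
      refine ⟨Pi.single (Sum.inr (i, j)) 1, ?_⟩
      funext k
      rw [Matrix.mulVecLin_apply]
      simp [Matrix.mulVecLin_apply, Matrix.mulVec, dotProduct,
        Pi.single_apply, hM]
    · rintro i x -
      refine ⟨Sum.elim (fun p => if p.1 = i then x p.2 else 0) 0, ?_⟩
      funext k
      rw [Matrix.mulVecLin_apply]
      simp only [Matrix.mulVecLin_apply, Matrix.mulVec, dotProduct,
        Fintype.sum_sum_type, Sum.elim_inl, Sum.elim_inr, mul_zero,
        Finset.sum_const_zero, add_zero, hM]
      rw [Fintype.sum_prod_type]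
      simp [mul_ite, Finset.sum_ite_eq', Matrix.mulVec, dotProduct]
  have hmem : n ∈ {t : ℕ | ∃ M : Matrix (Fin n) ((Fin m × Fin n) ⊕ (Fin m × Fin r)) ℝ,
      (∀ k c, ¬ concatPattern PA PB k c → M k c = 0) ∧ M.rank = t} := by
    refine ⟨M, ?_, ?_⟩
    · rintro k (⟨i, l⟩ | ⟨i, j⟩) hc
      · exact hA i k l hc
      · exact hB i k j hc
    · rw [Matrix.rank, hrange, finrank_top]
      simp
  have hbdd : ∀ t ∈ {t : ℕ | ∃ M : Matrix (Fin n) ((Fin m × Fin n) ⊕ (Fin m × Fin r)) ℝ,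
      (∀ k c, ¬ concatPattern PA PB k c → M k c = 0) ∧ M.rank = t}, t ≤ n := by
    rintro t ⟨N, -, rfl⟩
    simpa using N.rank_le_card_height
  exact le_antisymm (csSup_le ⟨n, hmem⟩ hbdd) (le_csSup ⟨n, hbdd⟩ hmem)
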